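/- Let Δ ⊂ ℝ^m be a regular m-simplex with side length √2, with vertices v₀, ..., v_m. Then for every affine hyperplane H ⊂ ℝ^m of dimension m−1, max_{i ∈ {0,...,m}} dist(v_i, H) ≥ Vol_m(Δ) / (2 · Vol_{m−1}(B^{m−1})), where Vol_m(Δ) = √(m+1)/m! and B^{m−1} is the closed unit ball in ℝ^{m−1}. -/

import Mathlib

open MeasureTheory Finset Real
open scoped RealInnerProductSpace

lemma vol0 : (volume (Metric.closedBall (0 : EuclideanSpace ℝ (Fin 0)) 1)).toReal = 1 := by
  have h : Metric.closedBall (0 : EuclideanSpace ℝ (Fin 0)) 1 = Set.univ := by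
    ext x; simp [Subsingleton.elim x 0]
  rw [h]
  have := (EuclideanSpace.volume_preserving_symm_measurableEquiv_toLp (Fin 0)).measure_preimage
    (MeasurableSet.univ (α := Fin 0 → ℝ)).nullMeasurableSet
  simp only [Set.preimage_univ] at this
  rw [this]
  simp [volume_pi, Measure.pi_univ]

lemma numA (m : ℕ) (hm : 1 ≤ m) :
    Real.sqrt (m + 1) / (m.factorial : ℝ) /
        (2 * (volume (Metric.closedBall (0 : EuclideanSpace ℝ (Fin (m - 1))) 1)).toReal)
      ≤ 1 / Real.sqrt (m + 1) := by
  rcases eq_or_lt_of_le hm with h1 | h2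
  · have hm0 : m = 1 := h1.symm
    subst hm0
    rw [show (1:ℕ) - 1 = 0 from rfl, vol0]
    rw [show ((1:ℕ):ℝ) + 1 = 2 by norm_num, Nat.factorial_one, Nat.cast_one, div_one, mul_one]
    rw [div_le_div_iff₀ (by positivity) (Real.sqrt_pos.2 (by norm_num))]
    rw [Real.mul_self_sqrt (by norm_num)]
    norm_num
  have : Nonempty (Fin (m-1)) := ⟨⟨0, by omega⟩⟩
  have hm1 : (1:ℝ) ≤ (m:ℝ) := by exact_mod_cast hm
  have hgpos : 0 < Real.Gamma ((m - 1 : ℕ) / 2 + 1) := Real.Gamma_pos_of_pos (by positivity)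
  have hvol : (volume (Metric.closedBall (0 : EuclideanSpace ℝ (Fin (m - 1))) 1)).toReal
      = Real.sqrt π ^ (m-1) / Real.Gamma ((m-1 : ℕ) / 2 + 1) := by
    rw [EuclideanSpace.volume_closedBall, Fintype.card_fin, ENNReal.ofReal_one, one_pow, one_mul,
      ENNReal.toReal_ofReal (div_nonneg (by positivity) hgpos.le)]
  rw [hvol]
  have hcast : ((m - 1 : ℕ) : ℝ) = (m : ℝ) - 1 := by
    have := Nat.cast_sub hm (R := ℝ); simpa using this
  rw [hcast]
  rw [hcast] at hgpos
  have hs : 0 < Real.sqrt ((m:ℝ) + 1) := Real.sqrt_pos.2 (by linarith)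
  rw [div_div, div_le_div_iff₀ (by positivity) hs]
  rw [Real.mul_self_sqrt (by linarith)]
  have key : ((m:ℝ) + 1) * Real.Gamma (((m:ℝ)-1)/2 + 1) ≤ 2 * (m.factorial : ℝ) * Real.sqrt π ^ (m-1) := by
    have e1 : ((m:ℝ)-1)/2 + 1 = ((m:ℝ)+1)/2 := by ring
    have e2 : ((m:ℝ) + 1) * Real.Gamma (((m:ℝ)+1)/2) = 2 * Real.Gamma (((m:ℝ)+1)/2 + 1) := by
      rw [Real.Gamma_add_one (by positivity)]; ring
    have e3 : Real.Gamma (((m:ℝ)+1)/2 + 1) ≤ Real.Gamma ((m:ℝ) + 1) := by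
      apply Real.Gamma_strictMonoOn_Ici.monotoneOn
      · simp only [Set.mem_Ici]; linarith
      · simp only [Set.mem_Ici]; linarith
      · linarith
    have e4 : Real.Gamma ((m:ℝ) + 1) = (m.factorial : ℝ) := by
      exact_mod_cast Real.Gamma_nat_eq_factorial m
    have e5 : (1:ℝ) ≤ Real.sqrt π ^ (m-1) := by
      apply one_le_pow₀
      rw [show (1:ℝ) = Real.sqrt 1 by simp]
      exact Real.sqrt_le_sqrt (by linarith [Real.pi_gt_three])
    have hfacpos : (0:ℝ) < m.factorial := by positivity
    rw [e1, e2]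
    nlinarith [Real.Gamma_pos_of_pos (show (0:ℝ) < ((m:ℝ)+1)/2 by linarith)]
  have hrw : 1 * ((m.factorial:ℝ) * (2 * (Real.sqrt π ^ (m-1) / Real.Gamma (((m:ℝ)-1)/2 + 1))))
      = 2 * (m.factorial:ℝ) * Real.sqrt π ^ (m-1) / Real.Gamma (((m:ℝ)-1)/2 + 1) := by ring
  rw [hrw, le_div_iff₀ hgpos]
  linarith [key]


lemma quadAux (N X Y s : ℝ) (hN : 2 ≤ N)
    (h : 0 ≤ (X + Y) * (N * s) - (1 + N * s^2) - N * (X * Y)) :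
    4 ≤ N * (X - Y)^2 := by
  nlinarith [sq_nonneg (X + Y - 2*s), h]

lemma geoB (m : ℕ) (hm : 1 ≤ m)
    (v : Fin (m + 1) → EuclideanSpace ℝ (Fin m))
    (hv : ∀ i j, i ≠ j → dist (v i) (v j) = Real.sqrt 2)
    (H : AffineSubspace ℝ (EuclideanSpace ℝ (Fin m)))
    (hHne : (H : Set (EuclideanSpace ℝ (Fin m))).Nonempty)
    (hHdim : Module.finrank ℝ H.direction = m - 1) :
    ∃ i, 1 / Real.sqrt (m + 1) ≤ Metric.infDist (v i) (H : Set (EuclideanSpace ℝ (Fin m))) := by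
  classical
  obtain ⟨p, hp⟩ := hHne
  have hfr : Module.finrank ℝ (EuclideanSpace ℝ (Fin m)) = m := finrank_euclideanSpace_fin
  -- get a unit normal
  have hne_top : H.direction ≠ ⊤ := by
    intro h
    rw [h, finrank_top, hfr] at hHdim
    omega
  have horth : (H.direction)ᗮ ≠ ⊥ := by
    intro h
    exact hne_top (Submodule.orthogonal_eq_bot_iff.mp h)
  obtain ⟨x, hxmem, hx0⟩ := Submodule.exists_mem_ne_zero_of_ne_bot horth
  set n : EuclideanSpace ℝ (Fin m) := ‖x‖⁻¹ • x with hn_def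
  have hn_mem : n ∈ (H.direction)ᗮ := Submodule.smul_mem _ _ hxmem
  have hn_norm : ‖n‖ = 1 := norm_smul_inv_norm hx0
  -- lower bound on infDist
  set t : ℝ := ⟪p, n⟫ with ht_def
  have key : ∀ y : EuclideanSpace ℝ (Fin m), |⟪y, n⟫ - t| ≤ Metric.infDist y H := by
    intro y
    by_contra hlt
    push_neg at hlt
    obtain ⟨a, ha, hd⟩ := (Metric.infDist_lt_iff ⟨p, hp⟩).mp hlt
    revert hd
    rw [imp_false, not_lt]
    have hap : ⟪a - p, n⟫ = 0 := by
      have := hn_mem (a - p) (AffineSubspace.vsub_mem_direction ha hp)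
      exact this
    have h1 : ⟪y, n⟫ - t = ⟪y - a, n⟫ := by
      rw [inner_sub_left] at hap ⊢
      simp only [ht_def]
      linarith
    rw [h1, dist_eq_norm]
    calc |⟪y - a, n⟫| ≤ ‖y - a‖ * ‖n‖ := abs_real_inner_le_norm _ _
      _ = ‖y - a‖ := by rw [hn_norm, mul_one]
  -- Gram matrix of edge vectors
  set w : Fin m → EuclideanSpace ℝ (Fin m) := fun i => v i.succ - v 0 with hw_def
  have hdist2 : ∀ a b, a ≠ b → ‖v a - v b‖ ^ 2 = 2 := by
    intro a b hab
    rw [← dist_eq_norm, hv a b hab, Real.sq_sqrt (by norm_num)]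
  have hgram : ∀ i j, ⟪w i, w j⟫ = if i = j then 2 else 1 := by
    intro i j
    by_cases hij : i = j
    · subst hij
      simp only [if_pos rfl]
      rw [real_inner_self_eq_norm_sq]
      exact hdist2 _ _ (Fin.succ_ne_zero i)
    · simp only [if_neg hij]
      have h1 : ‖w i‖ ^ 2 = 2 := hdist2 _ _ (Fin.succ_ne_zero i)
      have h2 : ‖w j‖ ^ 2 = 2 := hdist2 _ _ (Fin.succ_ne_zero j)
      have h3 : ‖w i - w j‖ ^ 2 = 2 := by
        have : w i - w j = v i.succ - v j.succ := by
          simp only [hw_def]; abel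
        rw [this]
        exact hdist2 _ _ (fun h => hij (Fin.succ_injective _ h))
      have := norm_sub_sq_real (w i) (w j)
      linarith
  -- linear independence
  have hli : LinearIndependent ℝ w := by
    rw [Fintype.linearIndependent_iff]
    intro c hc
    have h0 : ⟪∑ i, c i • w i, ∑ j, c j • w j⟫ = (0:ℝ) := by rw [hc]; simp
    rw [sum_inner] at h0
    simp_rw [inner_sum, real_inner_smul_left, real_inner_smul_right, hgram] at h0
    have hexp : ∀ i : Fin m, ∑ j, c i * (c j * if i = j then 2 else 1)
        = c i * ((∑ j, c j) + c i) := by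
      intro i
      rw [← Finset.mul_sum]
      congr 1
      have : ∀ j : Fin m, c j * (if i = j then (2:ℝ) else 1) = c j + if i = j then c j else 0 := by
        intro j; by_cases h : i = j <;> simp [h] <;> ring
      rw [Finset.sum_congr rfl (fun j _ => this j), Finset.sum_add_distrib, Finset.sum_ite_eq]
      simp
    rw [Finset.sum_congr rfl (fun i _ => hexp i)] at h0
    have h1 : (∑ i, c i) ^ 2 + ∑ i, (c i) ^ 2 = 0 := by
      have e : ∑ i, c i * ((∑ j, c j) + c i) = (∑ i, c i) ^ 2 + ∑ i, (c i) ^ 2 := by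
        simp_rw [mul_add]
        rw [Finset.sum_add_distrib, ← Finset.sum_mul, pow_two]
        congr 1
        exact Finset.sum_congr rfl fun i _ => (pow_two (c i)).symm
      rw [e] at h0
      linarith
    intro i
    have hsq : ∑ j, (c j) ^ 2 = 0 := by nlinarith [sq_nonneg (∑ i, c i), Finset.sum_nonneg (fun j (_ : j ∈ univ) => sq_nonneg (c j))]
    have := (Finset.sum_eq_zero_iff_of_nonneg (fun j _ => sq_nonneg (c j))).mp hsq i (mem_univ i)
    exact pow_eq_zero_iff two_ne_zero |>.mp this
  -- basis from linear independence
  have : Nonempty (Fin m) := ⟨⟨0, hm⟩⟩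
  have hcard : Fintype.card (Fin m) = Module.finrank ℝ (EuclideanSpace ℝ (Fin m)) := by
    simp [hfr]
  let b : Module.Basis (Fin m) ℝ _ := basisOfLinearIndependentOfCardEqFinrank hli hcard
  have hb : ∀ i, b i = w i := fun i => coe_basisOfLinearIndependentOfCardEqFinrank hli hcard ▸ rfl
  set c : Fin m → ℝ := fun i => b.repr n i with hc_def
  have hn_sum : ∑ i, c i • w i = n := by
    conv_rhs => rw [← b.sum_repr n]
    exact Finset.sum_congr rfl fun i _ => by rw [hb]
  set s : ℝ := ∑ i, c i with hs_def
  have h_wn : ∀ i, ⟪w i, n⟫ = c i + s := by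
    intro i
    rw [← hn_sum, inner_sum]
    simp_rw [real_inner_smul_right, hgram]
    have e : ∀ j : Fin m, c j * (if i = j then (2:ℝ) else 1) = c j + if i = j then c j else 0 := by
      intro j; by_cases h : i = j <;> simp [h] <;> ring
    rw [Finset.sum_congr rfl (fun j _ => e j), Finset.sum_add_distrib, Finset.sum_ite_eq]
    simp only [Finset.mem_univ, if_true, ← hs_def]
    ring
  have h_norm1 : ∑ i, (c i)^2 + s^2 = 1 := by
    have h1 : (1:ℝ) = ⟪n, n⟫ := by
      rw [real_inner_self_eq_norm_sq, hn_norm]; norm_num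
    have h2 : ⟪n, n⟫ = ∑ i, c i * (c i + s) := by
      nth_rewrite 1 [← hn_sum]
      rw [sum_inner]
      exact Finset.sum_congr rfl fun i _ => by rw [real_inner_smul_left, h_wn]
    have h3 : ∑ i, c i * (c i + s) = (∑ i, (c i)^2) + (∑ i, c i) * s := by
      have e : ∀ i : Fin m, c i * (c i + s) = (c i)^2 + c i * s := fun i => by ring
      rw [Finset.sum_congr rfl (fun i _ => e i), Finset.sum_add_distrib, ← Finset.sum_mul]
    rw [← hs_def] at h3
    nlinarith [h1, h2, h3]
  -- the projections of the vertices
  set t' : Fin (m+1) → ℝ := fun i => ⟪v i, n⟫ - t with ht'_def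
  set d : Fin (m+1) → ℝ := fun i => t' i - t' 0 with hd_def
  have hd0 : d 0 = 0 := by simp [hd_def]
  have hdsucc : ∀ i : Fin m, d i.succ = c i + s := by
    intro i
    have e1 : d i.succ = ⟪v i.succ - v 0, n⟫ := by
      simp only [hd_def, ht'_def, inner_sub_left]
      ring
    have e2 : w i = v i.succ - v 0 := by rw [hw_def]
    rw [e1, ← e2, h_wn i]
  have hT : ∑ i, d i = ((m:ℝ) + 1) * s := by
    rw [Fin.sum_univ_succ, hd0, zero_add,
        Finset.sum_congr rfl (fun (i : Fin m) _ => hdsucc i),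
        Finset.sum_add_distrib, Finset.sum_const, ← hs_def, Finset.card_univ, Fintype.card_fin,
        nsmul_eq_mul]
    ring
  have hQ : ∑ i, (d i)^2 = 1 + ((m:ℝ)+1) * s^2 := by
    rw [Fin.sum_univ_succ, hd0]
    rw [Finset.sum_congr rfl (fun (i : Fin m) _ => by rw [hdsucc i])]
    have e : ∀ i : Fin m, (c i + s)^2 = (c i)^2 + (2*s) * (c i) + s^2 := fun i => by ring
    rw [Finset.sum_congr rfl (fun i _ => e i), Finset.sum_add_distrib, Finset.sum_add_distrib,
        ← Finset.mul_sum, ← hs_def, Finset.sum_const, Finset.card_univ, Fintype.card_fin,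
        nsmul_eq_mul]
    linear_combination h_norm1
  -- max and min
  obtain ⟨I, -, hI⟩ := Finset.exists_max_image (univ : Finset (Fin (m+1))) d ⟨0, Finset.mem_univ 0⟩
  obtain ⟨J, -, hJ⟩ := Finset.exists_min_image (univ : Finset (Fin (m+1))) d ⟨0, Finset.mem_univ 0⟩
  set X := d I with hX_def
  set Y := d J with hY_def
  have hsum_nonneg : 0 ≤ ∑ i, (d i - Y) * (X - d i) :=
    Finset.sum_nonneg fun i _ => mul_nonneg (sub_nonneg.2 (hJ i (Finset.mem_univ i)))
      (sub_nonneg.2 (hI i (Finset.mem_univ i)))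
  have hexp : ∑ i, (d i - Y) * (X - d i)
      = (X + Y) * (∑ i, d i) - (∑ i, (d i)^2) - ((m:ℝ)+1) * (X * Y) := by
    have e : ∀ i : Fin (m+1), (d i - Y) * (X - d i) = (X + Y) * d i - (d i)^2 - X*Y :=
      fun i => by ring
    rw [Finset.sum_congr rfl (fun i _ => e i), Finset.sum_sub_distrib, Finset.sum_sub_distrib,
        ← Finset.mul_sum, Finset.sum_const, Finset.card_univ, Fintype.card_fin, nsmul_eq_mul]
    push_cast
    ring
  rw [hexp, hT, hQ] at hsum_nonneg
  clear_value X Y s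
  have hm1 : (1:ℝ) ≤ (m:ℝ) := by exact_mod_cast hm
  have hXY : 4 ≤ ((m:ℝ)+1) * (X - Y)^2 :=
    quadAux ((m:ℝ)+1) X Y s (by linarith) hsum_nonneg
  have hXYge : 0 ≤ X - Y := by linarith [hJ I (Finset.mem_univ I)]
  have hsqrtpos : 0 < Real.sqrt ((m:ℝ)+1) := Real.sqrt_pos.2 (by linarith)
  have hfinal : 2 / Real.sqrt ((m:ℝ)+1) ≤ X - Y := by
    have h1 : (2 / Real.sqrt ((m:ℝ)+1))^2 ≤ (X - Y)^2 := by
      rw [div_pow, Real.sq_sqrt (by linarith : (0:ℝ) ≤ (m:ℝ)+1), div_le_iff₀ (by linarith)]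
      calc (2:ℝ)^2 = 4 := by norm_num
        _ ≤ ((m:ℝ)+1) * (X-Y)^2 := hXY
        _ = (X-Y)^2 * ((m:ℝ)+1) := by ring
    calc 2 / Real.sqrt ((m:ℝ)+1) = Real.sqrt ((2 / Real.sqrt ((m:ℝ)+1))^2) :=
          (Real.sqrt_sq (by positivity)).symm
      _ ≤ Real.sqrt ((X - Y)^2) := Real.sqrt_le_sqrt h1
      _ = X - Y := Real.sqrt_sq hXYge
  have hIJ : t' I - t' J = X - Y := by
    simp only [hX_def, hY_def, hd_def]
    ring
  have key' : ∀ i : Fin (m+1), |t' i| ≤ Metric.infDist (v i) (H : Set (EuclideanSpace ℝ (Fin m))) :=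
    fun i => key (v i)
  clear_value t' d t n
  by_cases hcase : 1 / Real.sqrt ((m:ℝ)+1) ≤ t' I
  · refine ⟨I, ?_⟩
    have hk : |t' I| ≤ Metric.infDist (v I) (H : Set (EuclideanSpace ℝ (Fin m))) := key' I
    exact hcase.trans ((le_abs_self _).trans hk)
  · push_neg at hcase
    refine ⟨J, ?_⟩
    have hk : |t' J| ≤ Metric.infDist (v J) (H : Set (EuclideanSpace ℝ (Fin m))) := key' J
    have h2 : 1 / Real.sqrt ((m:ℝ)+1) ≤ -(t' J) := by
      have e : (2:ℝ)/Real.sqrt ((m:ℝ)+1)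
          = 1/Real.sqrt ((m:ℝ)+1) + 1/Real.sqrt ((m:ℝ)+1) := by ring
      linarith only [hfinal, hIJ, hcase, e]
    exact h2.trans ((neg_le_abs _).trans hk)

theorem stmt_7 (m : ℕ) (hm : 1 ≤ m)
    (v : Fin (m + 1) → EuclideanSpace ℝ (Fin m))
    (hv : ∀ i j, i ≠ j → dist (v i) (v j) = Real.sqrt 2)
    (H : AffineSubspace ℝ (EuclideanSpace ℝ (Fin m)))
    (hHne : (H : Set (EuclideanSpace ℝ (Fin m))).Nonempty)
    (hHdim : Module.finrank ℝ H.direction = m - 1) :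
    ∃ i, Real.sqrt (m + 1) / (m.factorial : ℝ) /
        (2 * (volume (Metric.closedBall (0 : EuclideanSpace ℝ (Fin (m - 1))) 1)).toReal)
      ≤ Metric.infDist (v i) (H : Set (EuclideanSpace ℝ (Fin m))) := by
  obtain ⟨i, hi⟩ := geoB m hm v hv H hHne hHdim
  exact ⟨i, (numA m hm).trans hi⟩
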